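/- Let G1, G2, G3 be pairwise disjoint connected simple graphs with |V(Gi)| ≥ 2 and mi = |E(Gi)| ≥ 1, with chosen vertices u1 ∈ V(G1), u2 ∈ V(G2), u3 ∈ V(G3), and let v ∈ V(G1) be a vertex at maximum distance from u1 in G1. Let G0 be obtained from G1 and G2 by identifying u1 with u2 into a vertex u. Let G be obtained from G0 and G3 by identifying u3 with u, and let G' be obtained from G0 and G3 by identifying u3 with v. If m2 ≥ m1, then W_e(G) ≤ W_e(G'). -/

import Mathlib

open SimpleGraph Finset
open scoped Classical

/-- The distance `d_G(f,g)` between two edges: `0` if they coincide, otherwise the minimum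
distance between endpoints plus one (i.e. the distance in the line graph). -/
noncomputable def eDist {V : Type*} (G : SimpleGraph V) (e f : Sym2 V) : ℕ :=
  if e = f then 0 else sInf {n : ℕ | ∃ u ∈ e, ∃ w ∈ f, G.dist u w = n} + 1

/-- The distance `d_G(v,f)` between a vertex and an edge: the minimum distance to an endpoint. -/
noncomputable def vDist {V : Type*} (G : SimpleGraph V) (v : V) (e : Sym2 V) : ℕ :=
  sInf {n : ℕ | ∃ u ∈ e, G.dist v u = n}

/-- The edge-Wiener index `W_e(G)`: the sum of `eDist` over unordered pairs of edges. -/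
noncomputable def edgeWiener {V : Type*} [Fintype V] (G : SimpleGraph V) : ℕ :=
  (∑ e ∈ G.edgeFinset, ∑ f ∈ G.edgeFinset, eDist G e f) / 2

/-- The vertex of `V1 ⊕ {y : V2 // y ≠ u2}` corresponding to `x : V2` after identifying
`u2` with `u1`. -/
noncomputable def glueVert {V1 V2 : Type*} (u1 : V1) (u2 : V2) (x : V2) :
    V1 ⊕ {y : V2 // y ≠ u2} :=
  if h : x = u2 then Sum.inl u1 else Sum.inr ⟨x, h⟩

/-- The graph obtained from disjoint graphs `G1`, `G2` by identifying `u1 ∈ V(G1)` with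
`u2 ∈ V(G2)` into a single vertex (namely `Sum.inl u1`). -/
noncomputable def joinAt {V1 V2 : Type*} (G1 : SimpleGraph V1) (G2 : SimpleGraph V2)
    (u1 : V1) (u2 : V2) : SimpleGraph (V1 ⊕ {y : V2 // y ≠ u2}) :=
  SimpleGraph.fromRel (fun a b =>
    (∃ x y, G1.Adj x y ∧ a = Sum.inl x ∧ b = Sum.inl y) ∨
    (∃ x y, G2.Adj x y ∧ a = glueVert u1 u2 x ∧ b = glueVert u1 u2 y))

section Glue

variable {VH VK : Type*} {H : SimpleGraph VH} {K : SimpleGraph VK} {w : VH} {u3 : VK}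

lemma glueVert_self : glueVert w u3 u3 = Sum.inl w := by simp [glueVert]

lemma glueVert_ne {x : VK} (h : x ≠ u3) : glueVert w u3 x = Sum.inr ⟨x, h⟩ := by
  simp [glueVert, h]

lemma glueVert_injective : Function.Injective (glueVert w u3) := by
  intro a b hab
  by_cases ha : a = u3 <;> by_cases hb : b = u3 <;>
    simp_all [glueVert, ha, hb]

lemma glueVert_eq_inl_iff {x : VK} {a : VH} :
    glueVert w u3 x = Sum.inl a ↔ x = u3 ∧ a = w := by
  by_cases h : x = u3 <;> simp [glueVert, h, eq_comm]

lemma glueVert_eq_inr_iff {x z : VK} {hz : z ≠ u3} :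
    glueVert w u3 x = Sum.inr ⟨z, hz⟩ ↔ x = z := by
  by_cases h : x = u3 <;> simp [glueVert, h]
  exact fun hh => (hz (hh ▸ h.symm ▸ rfl)).elim

end Glue

section Adj

variable {VH VK : Type*} {H : SimpleGraph VH} {K : SimpleGraph VK} {w : VH} {u3 : VK}

lemma joinAt_adj_inl_inl {x y : VH} :
    (joinAt H K w u3).Adj (Sum.inl x) (Sum.inl y) ↔ H.Adj x y := by
  rw [joinAt, SimpleGraph.fromRel_adj]
  constructor
  · rintro ⟨hne, h | h⟩ <;>
    · rcases h with ⟨a, b, hab, h1, h2⟩ | ⟨a, b, hab, h1, h2⟩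
      · obtain ⟨rfl⟩ := Sum.inl.inj h1; obtain ⟨rfl⟩ := Sum.inl.inj h2
        first | exact hab | exact hab.symm
      · rw [eq_comm, glueVert_eq_inl_iff] at h1 h2
        exact absurd (h1.1 ▸ h2.1 ▸ hab) K.irrefl
  · intro h
    exact ⟨by simpa using h.ne, Or.inl (Or.inl ⟨x, y, h, rfl, rfl⟩)⟩

lemma joinAt_adj_inl_inr {x : VH} {z : VK} {hz : z ≠ u3} :
    (joinAt H K w u3).Adj (Sum.inl x) (Sum.inr ⟨z, hz⟩) ↔ x = w ∧ K.Adj u3 z := by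
  rw [joinAt, SimpleGraph.fromRel_adj]
  constructor
  · rintro ⟨hne, h | h⟩
    · rcases h with ⟨a, b, hab, h1, h2⟩ | ⟨a, b, hab, h1, h2⟩
      · exact absurd h2 (by simp)
      · rw [eq_comm, glueVert_eq_inl_iff] at h1
        rw [eq_comm, glueVert_eq_inr_iff] at h2
        exact ⟨h1.2, h1.1 ▸ h2 ▸ hab⟩
    · rcases h with ⟨a, b, hab, h1, h2⟩ | ⟨a, b, hab, h1, h2⟩
      · exact absurd h1 (by simp)
      · rw [eq_comm, glueVert_eq_inl_iff] at h2
        rw [eq_comm, glueVert_eq_inr_iff] at h1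
        exact ⟨h2.2, (h2.1 ▸ h1 ▸ hab).symm⟩
  · rintro ⟨rfl, h⟩
    exact ⟨by simp, Or.inl (Or.inr ⟨u3, z, h, glueVert_self.symm, (glueVert_ne hz).symm⟩)⟩

lemma joinAt_adj_inr_inr {z z' : VK} {hz : z ≠ u3} {hz' : z' ≠ u3} :
    (joinAt H K w u3).Adj (Sum.inr ⟨z, hz⟩) (Sum.inr ⟨z', hz'⟩) ↔ K.Adj z z' := by
  rw [joinAt, SimpleGraph.fromRel_adj]
  constructor
  · rintro ⟨hne, h | h⟩
    · rcases h with ⟨a, b, hab, h1, h2⟩ | ⟨a, b, hab, h1, h2⟩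
      · exact absurd h1 (by simp)
      · rw [eq_comm, glueVert_eq_inr_iff] at h1 h2
        exact h1 ▸ h2 ▸ hab
    · rcases h with ⟨a, b, hab, h1, h2⟩ | ⟨a, b, hab, h1, h2⟩
      · exact absurd h1 (by simp)
      · rw [eq_comm, glueVert_eq_inr_iff] at h1 h2
        exact (h2 ▸ h1 ▸ hab).symm
  · intro h
    refine ⟨by simpa [Subtype.mk.injEq] using h.ne, Or.inl (Or.inr ⟨z, z', h, ?_, ?_⟩)⟩
    · exact (glueVert_ne hz).symm
    · exact (glueVert_ne hz').symm

lemma joinAt_adj_glue {a b : VK} (h : K.Adj a b) :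
    (joinAt H K w u3).Adj (glueVert w u3 a) (glueVert w u3 b) := by
  rw [joinAt, SimpleGraph.fromRel_adj]
  exact ⟨fun hh => h.ne (glueVert_injective hh), Or.inl (Or.inr ⟨a, b, h, rfl, rfl⟩)⟩

/-- `Sum.inl` as a graph homomorphism `H →g joinAt H K w u3`. -/
noncomputable def homInl (H : SimpleGraph VH) (K : SimpleGraph VK) (w : VH) (u3 : VK) :
    H →g joinAt H K w u3 where
  toFun := Sum.inl
  map_rel' := fun h => joinAt_adj_inl_inl.mpr h

/-- `glueVert` as a graph homomorphism `K →g joinAt H K w u3`. -/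
noncomputable def homGlue (H : SimpleGraph VH) (K : SimpleGraph VK) (w : VH) (u3 : VK) :
    K →g joinAt H K w u3 where
  toFun := glueVert w u3
  map_rel' := fun h => joinAt_adj_glue h

end Adj

section Dist

variable {VH VK : Type*} {H : SimpleGraph VH} {K : SimpleGraph VK} {w : VH} {u3 : VK}

/-- Projection to the `H`-side. -/
def projH (w : VH) : VH ⊕ {y : VK // y ≠ u3} → VH := Sum.elim id (fun _ => w)

/-- Projection to the `K`-side. -/
def projK (u3 : VK) : VH ⊕ {y : VK // y ≠ u3} → VK := Sum.elim (fun _ => u3) Subtype.val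

@[simp] lemma projH_inl (x : VH) : projH (u3 := u3) w (Sum.inl x) = x := rfl
@[simp] lemma projK_inl (x : VH) : projK (VH := VH) u3 (Sum.inl x) = u3 := rfl

@[simp] lemma projH_glue (x : VK) : projH (u3 := u3) w (glueVert w u3 x) = w := by
  by_cases h : x = u3 <;> simp [glueVert, h, projH]

@[simp] lemma projK_glue (x : VK) : projK (VH := VH) u3 (glueVert w u3 x) = x := by
  by_cases h : x = u3 <;> simp [glueVert, h, projK]

lemma joinAt_step {a b : VH ⊕ {y : VK // y ≠ u3}} (h : (joinAt H K w u3).Adj a b) :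
    H.dist (projH w a) (projH w b) + K.dist (projK u3 a) (projK u3 b) ≤ 1 := by
  rcases a with x | ⟨z, hz⟩ <;> rcases b with y | ⟨z', hz'⟩
  · rw [joinAt_adj_inl_inl] at h
    have : H.dist x y ≤ 1 := by
      simpa using SimpleGraph.dist_le (SimpleGraph.Walk.cons h SimpleGraph.Walk.nil)
    simpa [SimpleGraph.dist_self] using this
  · rw [joinAt_adj_inl_inr] at h
    have : K.dist u3 z' ≤ 1 := by
      simpa using SimpleGraph.dist_le (SimpleGraph.Walk.cons h.2 SimpleGraph.Walk.nil)
    simp only [projH_inl, projK_inl, h.1]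
    have hh : (⟨z', hz'⟩ : {y : VK // y ≠ u3}) = ⟨z', hz'⟩ := rfl
    simp [projH, projK, SimpleGraph.dist_self, this]
  · rw [SimpleGraph.adj_comm, joinAt_adj_inl_inr] at h
    have h1 : K.dist u3 z ≤ 1 := by
      simpa using SimpleGraph.dist_le (SimpleGraph.Walk.cons h.2 SimpleGraph.Walk.nil)
    have h2 : K.dist z u3 ≤ 1 := by rwa [SimpleGraph.dist_comm] at h1
    simp [projH, projK, h.1, SimpleGraph.dist_self, h2]
  · rw [joinAt_adj_inr_inr] at h
    have : K.dist z z' ≤ 1 := by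
      simpa using SimpleGraph.dist_le (SimpleGraph.Walk.cons h SimpleGraph.Walk.nil)
    simpa [projH, projK, SimpleGraph.dist_self] using this

lemma joinAt_walk_bound (hH : H.Connected) (hK : K.Connected)
    {a b : VH ⊕ {y : VK // y ≠ u3}} (p : (joinAt H K w u3).Walk a b) :
    H.dist (projH w a) (projH w b) + K.dist (projK u3 a) (projK u3 b) ≤ p.length := by
  induction p with
  | nil => simp [SimpleGraph.dist_self]
  | @cons a' c' b' h q ih =>
    have t1 := hH.dist_triangle (u := projH (u3 := u3) w a') (v := projH (u3 := u3) w c')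
      (w := projH (u3 := u3) w b')
    have t2 := hK.dist_triangle (u := projK (VH := VH) u3 a') (v := projK (VH := VH) u3 c')
      (w := projK (VH := VH) u3 b')
    have hs := joinAt_step (H := H) (K := K) h
    simp only [SimpleGraph.Walk.length_cons]
    omega

lemma joinAt_connected (hH : H.Connected) (hK : K.Connected) :
    (joinAt H K w u3).Connected := by
  rw [SimpleGraph.connected_iff]
  refine ⟨fun a b => ?_, ⟨Sum.inl w⟩⟩
  have key : ∀ c, (joinAt H K w u3).Reachable c (Sum.inl w) := by
    rintro (x | ⟨z, hz⟩)
    · exact SimpleGraph.Reachable.map (homInl H K w u3) (hH.preconnected x w)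
    · have := SimpleGraph.Reachable.map (homGlue H K w u3) (hK.preconnected z u3)
      have hc : ⇑(homGlue H K w u3) = glueVert w u3 := rfl
      rw [hc, glueVert_ne hz, glueVert_self] at this
      exact this
  exact (key a).trans (key b).symm

lemma joinAt_dist_inl_inl (hH : H.Connected) (hK : K.Connected) (x y : VH) :
    (joinAt H K w u3).dist (Sum.inl x) (Sum.inl y) = H.dist x y := by
  refine le_antisymm ?_ ?_
  · obtain ⟨p, hp⟩ := (hH.preconnected x y).exists_walk_length_eq_dist
    calc (joinAt H K w u3).dist (Sum.inl x) (Sum.inl y)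
        ≤ (p.map (homInl H K w u3)).length := SimpleGraph.dist_le _
      _ = H.dist x y := by rw [SimpleGraph.Walk.length_map, hp]
  · obtain ⟨q, hq⟩ :=
      ((joinAt_connected hH hK).preconnected (Sum.inl x) (Sum.inl y)).exists_walk_length_eq_dist
    have := joinAt_walk_bound (w := w) (u3 := u3) hH hK q
    simp only [projH_inl, projK_inl, SimpleGraph.dist_self, hq] at this
    omega

lemma joinAt_dist_glue_glue (hH : H.Connected) (hK : K.Connected) (a b : VK) :
    (joinAt H K w u3).dist (glueVert w u3 a) (glueVert w u3 b) = K.dist a b := by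
  refine le_antisymm ?_ ?_
  · obtain ⟨p, hp⟩ := (hK.preconnected a b).exists_walk_length_eq_dist
    calc (joinAt H K w u3).dist (glueVert w u3 a) (glueVert w u3 b)
        ≤ (p.map (homGlue H K w u3)).length := SimpleGraph.dist_le _
      _ = K.dist a b := by rw [SimpleGraph.Walk.length_map, hp]
  · obtain ⟨q, hq⟩ := ((joinAt_connected hH hK).preconnected
      (glueVert w u3 a) (glueVert w u3 b)).exists_walk_length_eq_dist
    have := joinAt_walk_bound (w := w) (u3 := u3) hH hK q
    simp only [projH_glue, projK_glue, SimpleGraph.dist_self, hq] at this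
    omega

lemma joinAt_dist_inl_glue (hH : H.Connected) (hK : K.Connected) (x : VH) (b : VK) :
    (joinAt H K w u3).dist (Sum.inl x) (glueVert w u3 b)
      = H.dist x w + K.dist u3 b := by
  refine le_antisymm ?_ ?_
  · obtain ⟨p, hp⟩ := (hH.preconnected x w).exists_walk_length_eq_dist
    obtain ⟨q, hq⟩ := (hK.preconnected u3 b).exists_walk_length_eq_dist
    have hcast : (Sum.inl w : VH ⊕ {y : VK // y ≠ u3}) = glueVert w u3 u3 :=
      glueVert_self.symm
    let q' : (joinAt H K w u3).Walk (Sum.inl w) (glueVert w u3 b) :=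
      (q.map (homGlue H K w u3)).copy glueVert_self rfl
    calc (joinAt H K w u3).dist (Sum.inl x) (glueVert w u3 b)
        ≤ ((p.map (homInl H K w u3)).append q').length := SimpleGraph.dist_le _
      _ = H.dist x w + K.dist u3 b := by
          erw [SimpleGraph.Walk.length_append, SimpleGraph.Walk.length_map,
            SimpleGraph.Walk.length_copy, SimpleGraph.Walk.length_map, hp, hq]
  · obtain ⟨q, hq⟩ := ((joinAt_connected hH hK).preconnected
      (Sum.inl x) (glueVert w u3 b)).exists_walk_length_eq_dist
    have := joinAt_walk_bound (w := w) (u3 := u3) hH hK q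
    simp only [projH_inl, projK_inl, projH_glue, projK_glue, hq] at this
    have h1 : H.dist x w ≤ H.dist x w := le_rfl
    omega

end Dist

section Edges

variable {VH VK : Type*} [Fintype VH] [Fintype VK]
variable {H : SimpleGraph VH} {K : SimpleGraph VK} {w : VH} {u3 : VK}

lemma mapInl_mem_edgeSet {e : Sym2 VH} (he : e ∈ H.edgeSet) :
    Sym2.map (Sum.inl : VH → VH ⊕ {y : VK // y ≠ u3}) e ∈ (joinAt H K w u3).edgeSet := by
  induction e with
  | _ c d =>
    rw [SimpleGraph.mem_edgeSet] at he
    rw [Sym2.map_pair_eq, SimpleGraph.mem_edgeSet]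
    exact joinAt_adj_inl_inl.mpr he

lemma mapGlue_mem_edgeSet {e : Sym2 VK} (he : e ∈ K.edgeSet) :
    Sym2.map (glueVert w u3) e ∈ (joinAt H K w u3).edgeSet := by
  induction e with
  | _ c d =>
    rw [SimpleGraph.mem_edgeSet] at he
    rw [Sym2.map_pair_eq, SimpleGraph.mem_edgeSet]
    exact joinAt_adj_glue he

lemma joinAt_edgeFinset :
    (joinAt H K w u3).edgeFinset
      = H.edgeFinset.image (Sym2.map Sum.inl)
        ∪ K.edgeFinset.image (Sym2.map (glueVert w u3)) := by
  ext e
  constructor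
  · intro he
    rw [SimpleGraph.mem_edgeFinset] at he
    revert he
    refine Sym2.inductionOn e (fun a b => ?_)
    intro h
    rw [SimpleGraph.mem_edgeSet] at h
    simp only [Finset.mem_union, Finset.mem_image, SimpleGraph.mem_edgeFinset]
    rcases a with x | ⟨z, hz⟩ <;> rcases b with y | ⟨z', hz'⟩
    · exact Or.inl ⟨s(x, y), joinAt_adj_inl_inl.mp h, by simp⟩
    · rw [joinAt_adj_inl_inr] at h
      refine Or.inr ⟨s(u3, z'), h.2, ?_⟩
      rw [Sym2.map_pair_eq, glueVert_self, glueVert_ne hz', h.1]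
    · rw [SimpleGraph.adj_comm, joinAt_adj_inl_inr] at h
      refine Or.inr ⟨s(u3, z), h.2, ?_⟩
      rw [Sym2.map_pair_eq, glueVert_self, glueVert_ne hz, h.1, Sym2.eq_swap]
    · rw [joinAt_adj_inr_inr] at h
      refine Or.inr ⟨s(z, z'), h, ?_⟩
      rw [Sym2.map_pair_eq, glueVert_ne hz, glueVert_ne hz']
  · intro he
    rw [Finset.mem_union] at he
    rw [SimpleGraph.mem_edgeFinset]
    rcases he with he | he
    · obtain ⟨e', he', rfl⟩ := Finset.mem_image.mp he
      exact mapInl_mem_edgeSet (SimpleGraph.mem_edgeFinset.mp he')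
    · obtain ⟨e', he', rfl⟩ := Finset.mem_image.mp he
      exact mapGlue_mem_edgeSet (SimpleGraph.mem_edgeFinset.mp he')

lemma mapInl_ne_mapGlue {e : Sym2 VH} {f : Sym2 VK} (hf : f ∈ K.edgeSet) :
    Sym2.map (Sum.inl : VH → VH ⊕ {y : VK // y ≠ u3}) e ≠ Sym2.map (glueVert w u3) f := by
  intro heq
  revert hf heq
  refine Sym2.inductionOn f (fun c d => ?_)
  intro hf heq
  rw [SimpleGraph.mem_edgeSet] at hf
  have hcd : c ≠ u3 ∨ d ≠ u3 := by
    by_contra hc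
    push_neg at hc
    exact K.irrefl (hc.1 ▸ hc.2 ▸ hf)
  rcases hcd with hc | hd
  · have hmem : (Sum.inr ⟨c, hc⟩ : VH ⊕ {y : VK // y ≠ u3}) ∈ Sym2.map (glueVert w u3) s(c, d) := by
      rw [Sym2.map_pair_eq, glueVert_ne hc]; simp
    rw [← heq, Sym2.mem_map] at hmem
    obtain ⟨aa, _, haa⟩ := hmem
    exact Sum.inl_ne_inr haa
  · have hmem : (Sum.inr ⟨d, hd⟩ : VH ⊕ {y : VK // y ≠ u3}) ∈ Sym2.map (glueVert w u3) s(c, d) := by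
      rw [Sym2.map_pair_eq, glueVert_ne hd]; simp
    rw [← heq, Sym2.mem_map] at hmem
    obtain ⟨aa, _, haa⟩ := hmem
    exact Sum.inl_ne_inr haa

lemma joinAt_edge_disjoint :
    Disjoint (H.edgeFinset.image (Sym2.map (Sum.inl : VH → VH ⊕ {y : VK // y ≠ u3})))
      (K.edgeFinset.image (Sym2.map (glueVert w u3))) := by
  rw [Finset.disjoint_left]
  rintro e he1 he2
  obtain ⟨e1, he1', rfl⟩ := Finset.mem_image.mp he1
  obtain ⟨e2, he2', heq⟩ := Finset.mem_image.mp he2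
  exact mapInl_ne_mapGlue (SimpleGraph.mem_edgeFinset.mp he2') heq.symm

end Edges

section InfLemmas

variable {α β : Type*}

lemma sInf_sym2 (f : α → ℕ) (x y : α) :
    sInf {n : ℕ | ∃ a ∈ s(x, y), f a = n} = min (f x) (f y) := by
  have hset : {n : ℕ | ∃ a ∈ s(x, y), f a = n} = {f x, f y} := by
    ext n
    simp only [Set.mem_setOf_eq, Set.mem_insert_iff, Set.mem_singleton_iff]
    constructor
    · rintro ⟨a, ha, rfl⟩
      rcases Sym2.mem_iff.mp ha with rfl | rfl
      · exact Or.inl rfl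
      · exact Or.inr rfl
    · rintro (rfl | rfl)
      exacts [⟨x, Sym2.mem_iff.mpr (Or.inl rfl), rfl⟩, ⟨y, Sym2.mem_iff.mpr (Or.inr rfl), rfl⟩]
  rw [hset]
  refine le_antisymm (le_min (Nat.sInf_le (by simp)) (Nat.sInf_le (by simp))) ?_
  have hmem : sInf ({f x, f y} : Set ℕ) ∈ ({f x, f y} : Set ℕ) :=
    Nat.sInf_mem ⟨f x, by simp⟩
  simp only [Set.mem_insert_iff, Set.mem_singleton_iff] at hmem
  rcases hmem with h | h <;> rw [h] <;> simp

lemma sInf_sym2_pair (g : α → β → ℕ) (x y : α) (c d : β) :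
    sInf {n : ℕ | ∃ a ∈ s(x, y), ∃ b ∈ s(c, d), g a b = n}
      = min (min (g x c) (g x d)) (min (g y c) (g y d)) := by
  have hset : {n : ℕ | ∃ a ∈ s(x, y), ∃ b ∈ s(c, d), g a b = n}
      = {g x c, g x d, g y c, g y d} := by
    ext n
    simp only [Set.mem_setOf_eq, Set.mem_insert_iff, Set.mem_singleton_iff]
    constructor
    · rintro ⟨a, ha, b, hb, rfl⟩
      rcases Sym2.mem_iff.mp ha with rfl | rfl <;>
        rcases Sym2.mem_iff.mp hb with rfl | rfl <;> tauto
    · rintro (rfl | rfl | rfl | rfl)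
      exacts [⟨x, Sym2.mem_iff.mpr (Or.inl rfl), c, Sym2.mem_iff.mpr (Or.inl rfl), rfl⟩,
        ⟨x, Sym2.mem_iff.mpr (Or.inl rfl), d, Sym2.mem_iff.mpr (Or.inr rfl), rfl⟩,
        ⟨y, Sym2.mem_iff.mpr (Or.inr rfl), c, Sym2.mem_iff.mpr (Or.inl rfl), rfl⟩,
        ⟨y, Sym2.mem_iff.mpr (Or.inr rfl), d, Sym2.mem_iff.mpr (Or.inr rfl), rfl⟩]
  rw [hset]
  refine le_antisymm (le_min (le_min (Nat.sInf_le (by simp)) (Nat.sInf_le (by simp)))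
    (le_min (Nat.sInf_le (by simp)) (Nat.sInf_le (by simp)))) ?_
  have hmem : sInf ({g x c, g x d, g y c, g y d} : Set ℕ)
      ∈ ({g x c, g x d, g y c, g y d} : Set ℕ) :=
    Nat.sInf_mem ⟨g x c, by simp⟩
  simp only [Set.mem_insert_iff, Set.mem_singleton_iff] at hmem
  rcases hmem with h | h | h | h <;> rw [h] <;> omega

lemma vDist_pair {V : Type*} (G : SimpleGraph V) (v x y : V) :
    vDist G v s(x, y) = min (G.dist v x) (G.dist v y) :=
  sInf_sym2 (G.dist v) x y

end InfLemmas

section EDist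

variable {VH VK : Type*} [Fintype VH] [Fintype VK]
variable {H : SimpleGraph VH} {K : SimpleGraph VK} {w : VH} {u3 : VK}

omit [Fintype VH] [Fintype VK] in
lemma eDist_comm {V : Type*} (G : SimpleGraph V) (e f : Sym2 V) :
    eDist G e f = eDist G f e := by
  unfold eDist
  by_cases h : e = f
  · simp [h]
  · rw [if_neg h, if_neg (Ne.symm h)]
    congr 1
    congr 1
    ext n
    constructor
    · rintro ⟨a, ha, b, hb, rfl⟩
      exact ⟨b, hb, a, ha, SimpleGraph.dist_comm⟩
    · rintro ⟨a, ha, b, hb, rfl⟩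
      exact ⟨b, hb, a, ha, SimpleGraph.dist_comm⟩

lemma eDist_map_inl (hH : H.Connected) (hK : K.Connected) (e f : Sym2 VH) :
    eDist (joinAt H K w u3) (Sym2.map Sum.inl e) (Sym2.map Sum.inl f) = eDist H e f := by
  unfold eDist
  have hinj : Function.Injective
      (Sym2.map (Sum.inl : VH → VH ⊕ {y : VK // y ≠ u3})) :=
    Sym2.map.injective Sum.inl_injective
  by_cases h : e = f
  · rw [if_pos (h ▸ rfl), if_pos h]
  · rw [if_neg (fun hh => h (hinj hh)), if_neg h]
    congr 2
    ext n
    simp only [Set.mem_setOf_eq, Sym2.mem_map]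
    constructor
    · rintro ⟨a, ⟨a', ha', rfl⟩, b, ⟨b', hb', rfl⟩, rfl⟩
      exact ⟨a', ha', b', hb', (joinAt_dist_inl_inl hH hK a' b').symm⟩
    · rintro ⟨a, ha, b, hb, rfl⟩
      exact ⟨Sum.inl a, ⟨a, ha, rfl⟩, Sum.inl b, ⟨b, hb, rfl⟩,
        joinAt_dist_inl_inl hH hK a b⟩

lemma eDist_map_glue (hH : H.Connected) (hK : K.Connected) (e f : Sym2 VK) :
    eDist (joinAt H K w u3) (Sym2.map (glueVert w u3) e) (Sym2.map (glueVert w u3) f)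
      = eDist K e f := by
  unfold eDist
  have hinj : Function.Injective (Sym2.map (glueVert w u3)) :=
    Sym2.map.injective glueVert_injective
  by_cases h : e = f
  · rw [if_pos (h ▸ rfl), if_pos h]
  · rw [if_neg (fun hh => h (hinj hh)), if_neg h]
    congr 2
    ext n
    simp only [Set.mem_setOf_eq, Sym2.mem_map]
    constructor
    · rintro ⟨a, ⟨a', ha', rfl⟩, b, ⟨b', hb', rfl⟩, rfl⟩
      exact ⟨a', ha', b', hb', (joinAt_dist_glue_glue hH hK a' b').symm⟩
    · rintro ⟨a, ha, b, hb, rfl⟩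
      exact ⟨glueVert w u3 a, ⟨a, ha, rfl⟩, glueVert w u3 b, ⟨b, hb, rfl⟩,
        joinAt_dist_glue_glue hH hK a b⟩

lemma eDist_cross (hH : H.Connected) (hK : K.Connected) {e : Sym2 VH} {f : Sym2 VK}
    (hf : f ∈ K.edgeSet) :
    eDist (joinAt H K w u3) (Sym2.map Sum.inl e) (Sym2.map (glueVert w u3) f)
      = vDist H w e + vDist K u3 f + 1 := by
  unfold eDist
  rw [if_neg (mapInl_ne_mapGlue hf)]
  congr 1
  have hset : {n : ℕ | ∃ u ∈ Sym2.map Sum.inl e, ∃ b ∈ Sym2.map (glueVert w u3) f,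
      (joinAt H K w u3).dist u b = n}
      = {n : ℕ | ∃ a ∈ e, ∃ b ∈ f, H.dist a w + K.dist u3 b = n} := by
    ext n
    simp only [Set.mem_setOf_eq, Sym2.mem_map]
    constructor
    · rintro ⟨a, ⟨a', ha', rfl⟩, b, ⟨b', hb', rfl⟩, rfl⟩
      exact ⟨a', ha', b', hb', (joinAt_dist_inl_glue hH hK a' b').symm⟩
    · rintro ⟨a, ha, b, hb, rfl⟩
      exact ⟨Sum.inl a, ⟨a, ha, rfl⟩, glueVert w u3 b, ⟨b, hb, rfl⟩,
        joinAt_dist_inl_glue hH hK a b⟩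
  rw [hset]
  clear hset hf
  induction e with
  | _ x y =>
    induction f with
    | _ c d =>
      rw [sInf_sym2_pair (fun a b => H.dist a w + K.dist u3 b) x y c d,
        vDist_pair, vDist_pair]
      have h1 : H.dist w x = H.dist x w := SimpleGraph.dist_comm
      have h2 : H.dist w y = H.dist y w := SimpleGraph.dist_comm
      omega

lemma vDist_map_inl (hH : H.Connected) (hK : K.Connected) (x : VH) (e : Sym2 VH) :
    vDist (joinAt H K w u3) (Sum.inl x) (Sym2.map Sum.inl e) = vDist H x e := by
  unfold vDist
  congr 1
  ext n
  simp only [Set.mem_setOf_eq, Sym2.mem_map]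
  constructor
  · rintro ⟨a, ⟨a', ha', rfl⟩, rfl⟩
    exact ⟨a', ha', (joinAt_dist_inl_inl hH hK x a').symm⟩
  · rintro ⟨a, ha, rfl⟩
    exact ⟨Sum.inl a, ⟨a, ha, rfl⟩, joinAt_dist_inl_inl hH hK x a⟩

lemma vDist_map_glue (hH : H.Connected) (hK : K.Connected) (x : VH) (f : Sym2 VK) :
    vDist (joinAt H K w u3) (Sum.inl x) (Sym2.map (glueVert w u3) f)
      = H.dist x w + vDist K u3 f := by
  unfold vDist
  have hset : {n : ℕ | ∃ u ∈ Sym2.map (glueVert w u3) f,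
      (joinAt H K w u3).dist (Sum.inl x) u = n}
      = {n : ℕ | ∃ b ∈ f, H.dist x w + K.dist u3 b = n} := by
    ext n
    simp only [Set.mem_setOf_eq, Sym2.mem_map]
    constructor
    · rintro ⟨a, ⟨a', ha', rfl⟩, rfl⟩
      exact ⟨a', ha', (joinAt_dist_inl_glue hH hK x a').symm⟩
    · rintro ⟨a, ha, rfl⟩
      exact ⟨glueVert w u3 a, ⟨a, ha, rfl⟩, joinAt_dist_inl_glue hH hK x a⟩
  rw [hset]
  induction f with
  | _ c d =>
    rw [sInf_sym2 (fun b => H.dist x w + K.dist u3 b) c d, sInf_sym2 (K.dist u3) c d]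
    omega

end EDist

section Decomp

variable {VH VK : Type*} [Fintype VH] [Fintype VK]
variable {H : SimpleGraph VH} {K : SimpleGraph VK} {w : VH} {u3 : VK}

lemma injOn_mapInl (s : Finset (Sym2 VH)) :
    ∀ x ∈ s, ∀ y ∈ s,
      Sym2.map (Sum.inl : VH → VH ⊕ {y : VK // y ≠ u3}) x = Sym2.map Sum.inl y → x = y :=
  fun x _ y _ h =>
    Sym2.map.injective (Sum.inl_injective) h

lemma injOn_mapGlue (s : Finset (Sym2 VK)) :
    ∀ x ∈ s, ∀ y ∈ s,
      Sym2.map (glueVert w u3) x = Sym2.map (glueVert w u3) y → x = y :=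
  fun x _ y _ h => Sym2.map.injective glueVert_injective h

lemma joinAt_doubleSum (hH : H.Connected) (hK : K.Connected) :
    ∑ e ∈ (joinAt H K w u3).edgeFinset, ∑ f ∈ (joinAt H K w u3).edgeFinset,
        eDist (joinAt H K w u3) e f
      = (∑ e ∈ H.edgeFinset, ∑ f ∈ H.edgeFinset, eDist H e f)
        + (∑ e ∈ K.edgeFinset, ∑ f ∈ K.edgeFinset, eDist K e f)
        + 2 * (K.edgeFinset.card * (∑ e ∈ H.edgeFinset, vDist H w e)
              + H.edgeFinset.card * (∑ f ∈ K.edgeFinset, vDist K u3 f)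
              + H.edgeFinset.card * K.edgeFinset.card) := by
  have hcross : ∑ e ∈ H.edgeFinset, ∑ f ∈ K.edgeFinset,
      (vDist H w e + vDist K u3 f + 1)
      = K.edgeFinset.card * (∑ e ∈ H.edgeFinset, vDist H w e)
        + H.edgeFinset.card * (∑ f ∈ K.edgeFinset, vDist K u3 f)
        + H.edgeFinset.card * K.edgeFinset.card := by
    simp only [Finset.sum_add_distrib, Finset.sum_const, smul_eq_mul, mul_one]
    rw [← Finset.mul_sum]
  rw [joinAt_edgeFinset]
  simp only [Finset.sum_union joinAt_edge_disjoint]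
  have hHH : ∑ e ∈ H.edgeFinset.image (Sym2.map Sum.inl),
      ∑ f ∈ H.edgeFinset.image (Sym2.map Sum.inl), eDist (joinAt H K w u3) e f
      = ∑ e ∈ H.edgeFinset, ∑ f ∈ H.edgeFinset, eDist H e f := by
    rw [Finset.sum_image (injOn_mapInl _)]
    refine Finset.sum_congr rfl fun e _ => ?_
    rw [Finset.sum_image (injOn_mapInl _)]
    exact Finset.sum_congr rfl fun f _ => eDist_map_inl hH hK e f
  have hKK : ∑ e ∈ K.edgeFinset.image (Sym2.map (glueVert w u3)),
      ∑ f ∈ K.edgeFinset.image (Sym2.map (glueVert w u3)), eDist (joinAt H K w u3) e f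
      = ∑ e ∈ K.edgeFinset, ∑ f ∈ K.edgeFinset, eDist K e f := by
    rw [Finset.sum_image (injOn_mapGlue _)]
    refine Finset.sum_congr rfl fun e _ => ?_
    rw [Finset.sum_image (injOn_mapGlue _)]
    exact Finset.sum_congr rfl fun f _ => eDist_map_glue hH hK e f
  have hHK : ∑ e ∈ H.edgeFinset.image (Sym2.map Sum.inl),
      ∑ f ∈ K.edgeFinset.image (Sym2.map (glueVert w u3)), eDist (joinAt H K w u3) e f
      = ∑ e ∈ H.edgeFinset, ∑ f ∈ K.edgeFinset, (vDist H w e + vDist K u3 f + 1) := by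
    rw [Finset.sum_image (injOn_mapInl _)]
    refine Finset.sum_congr rfl fun e _ => ?_
    rw [Finset.sum_image (injOn_mapGlue _)]
    exact Finset.sum_congr rfl fun f hf =>
      eDist_cross hH hK (SimpleGraph.mem_edgeFinset.mp hf)
  have hKH : ∑ e ∈ K.edgeFinset.image (Sym2.map (glueVert w u3)),
      ∑ f ∈ H.edgeFinset.image (Sym2.map Sum.inl), eDist (joinAt H K w u3) e f
      = ∑ e ∈ H.edgeFinset, ∑ f ∈ K.edgeFinset, (vDist H w e + vDist K u3 f + 1) := by
    rw [Finset.sum_comm]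
    rw [Finset.sum_image (injOn_mapInl _)]
    refine Finset.sum_congr rfl fun e _ => ?_
    rw [Finset.sum_image (injOn_mapGlue _)]
    refine Finset.sum_congr rfl fun f hf => ?_
    rw [eDist_comm]
    exact eDist_cross hH hK (SimpleGraph.mem_edgeFinset.mp hf)
  simp only [Finset.sum_add_distrib]
  rw [hHH, hKK, hHK, hKH, hcross]
  ring

end Decomp

section Final

variable {V1 V2 : Type*} [Fintype V1] [Fintype V2]
variable {G1 : SimpleGraph V1} {G2 : SimpleGraph V2} {u1 : V1} {u2 : V2}

lemma vDistSum_joinAt (h1 : G1.Connected) (h2 : G2.Connected) (x : V1) :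
    ∑ e ∈ (joinAt G1 G2 u1 u2).edgeFinset, vDist (joinAt G1 G2 u1 u2) (Sum.inl x) e
      = (∑ e ∈ G1.edgeFinset, vDist G1 x e)
        + (∑ f ∈ G2.edgeFinset, (G1.dist x u1 + vDist G2 u2 f)) := by
  rw [joinAt_edgeFinset, Finset.sum_union joinAt_edge_disjoint,
    Finset.sum_image (injOn_mapInl _), Finset.sum_image (injOn_mapGlue _)]
  congr 1
  · exact Finset.sum_congr rfl fun e _ => vDist_map_inl h1 h2 x e
  · exact Finset.sum_congr rfl fun f _ => vDist_map_glue h1 h2 x f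

omit [Fintype V1] [Fintype V2] in
lemma vDist_triangle (h1 : G1.Connected) (a b : V1) (e : Sym2 V1) :
    vDist G1 a e ≤ G1.dist a b + vDist G1 b e := by
  induction e with
  | _ x y =>
    rw [vDist_pair, vDist_pair]
    have t1 := h1.dist_triangle (u := a) (v := b) (w := x)
    have t2 := h1.dist_triangle (u := a) (v := b) (w := y)
    omega

lemma vDistSum_mono (h1 : G1.Connected) (h2 : G2.Connected) (u1 : V1) (v : V1)
    (hm : G1.edgeFinset.card ≤ G2.edgeFinset.card) :
    ∑ e ∈ (joinAt G1 G2 u1 u2).edgeFinset, vDist (joinAt G1 G2 u1 u2) (Sum.inl u1) e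
      ≤ ∑ e ∈ (joinAt G1 G2 u1 u2).edgeFinset, vDist (joinAt G1 G2 u1 u2) (Sum.inl v) e := by
  rw [vDistSum_joinAt h1 h2, vDistSum_joinAt h1 h2]
  simp only [Finset.sum_add_distrib, Finset.sum_const, smul_eq_mul, SimpleGraph.dist_self,
    Finset.sum_const, mul_zero]
  have key : ∑ e ∈ G1.edgeFinset, vDist G1 u1 e
      ≤ (∑ e ∈ G1.edgeFinset, vDist G1 v e) + G1.edgeFinset.card * G1.dist u1 v := by
    calc ∑ e ∈ G1.edgeFinset, vDist G1 u1 e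
        ≤ ∑ e ∈ G1.edgeFinset, (G1.dist u1 v + vDist G1 v e) :=
          Finset.sum_le_sum fun e _ => vDist_triangle h1 u1 v e
      _ = (∑ e ∈ G1.edgeFinset, vDist G1 v e) + G1.edgeFinset.card * G1.dist u1 v := by
          rw [Finset.sum_add_distrib, Finset.sum_const, smul_eq_mul]
          ring
  have hd : G1.dist u1 v = G1.dist v u1 := SimpleGraph.dist_comm
  have hcard : G1.edgeFinset.card * G1.dist u1 v ≤ G2.edgeFinset.card * G1.dist v u1 := by
    rw [← hd]; exact Nat.mul_le_mul_right _ hm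
  omega

end Final

theorem stmt8 {V1 V2 V3 : Type*} [Fintype V1] [Fintype V2] [Fintype V3]
    (G1 : SimpleGraph V1) (G2 : SimpleGraph V2) (G3 : SimpleGraph V3)
    (h1 : G1.Connected) (h2 : G2.Connected) (h3 : G3.Connected)
    (hn1 : 2 ≤ Fintype.card V1) (hn2 : 2 ≤ Fintype.card V2) (hn3 : 2 ≤ Fintype.card V3)
    (hm1 : 1 ≤ G1.edgeFinset.card) (hm2 : 1 ≤ G2.edgeFinset.card)
    (hm3 : 1 ≤ G3.edgeFinset.card)
    (u1 : V1) (u2 : V2) (u3 : V3) (v : V1)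
    (hfar : ∀ w : V1, G1.dist u1 w ≤ G1.dist u1 v)
    (hm : G1.edgeFinset.card ≤ G2.edgeFinset.card) :
    edgeWiener (joinAt (joinAt G1 G2 u1 u2) G3 (Sum.inl u1) u3)
      ≤ edgeWiener (joinAt (joinAt G1 G2 u1 u2) G3 (Sum.inl v) u3) := by
  have hH0 : (joinAt G1 G2 u1 u2).Connected := joinAt_connected h1 h2
  unfold edgeWiener
  apply Nat.div_le_div_right
  rw [joinAt_doubleSum hH0 h3, joinAt_doubleSum hH0 h3]
  have hS := vDistSum_mono (u2 := u2) h1 h2 u1 v hm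
  gcongr
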